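/- For every integer n ≥ 1 and every real t > 0, the series Σ_{k=0}^∞ h_n(k) e^{-(n/2+k)t} converges absolutely and cosh(t/2)/(sinh(t/2))^{n+1} = 2^n · Σ_{k=0}^∞ h_n(k) e^{-(n/2+k)t}. -/

import Mathlib

open scoped BigOperators

/-- `h_n(k) = (2k+n)·(k+1)(k+2)⋯(k+n-1)/n!`, the dimension of the space of
spherical harmonics of degree `k` on `S^{n+1}` (for `n ≥ 1`). -/
noncomputable def hCoef (n k : ℕ) : ℝ :=
  (((2 * k + n) * ∏ j ∈ Finset.Icc 1 (n - 1), (k + j) : ℕ) : ℝ) / (n.factorial : ℝ)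

lemma prod_Icc_eq_ascFactorial (k m : ℕ) :
    ∏ j ∈ Finset.Icc 1 m, (k + j) = (k + 1).ascFactorial m := by
  induction m with
  | zero => simp
  | succ m ih =>
      rw [Finset.prod_Icc_succ_top (Nat.le_add_left 1 m), ih, Nat.ascFactorial_succ]
      ring

lemma hCoef_key (m k : ℕ) :
    (2 * k + (m + 1)) * ∏ j ∈ Finset.Icc 1 m, (k + j) =
      (m + 1).factorial * ((k + (m + 1)).choose (m + 1) + (k + (m + 1) - 1).choose (m + 1)) := by
  rw [prod_Icc_eq_ascFactorial]
  have h1 : (k + (m + 1)) * (k + 1).ascFactorial m =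
      (m + 1).factorial * (k + (m + 1)).choose (m + 1) := by
    rw [← Nat.ascFactorial_eq_factorial_mul_choose, Nat.ascFactorial_succ]
    ring
  have h2 : k * (k + 1).ascFactorial m =
      (m + 1).factorial * (k + (m + 1) - 1).choose (m + 1) := by
    rw [← Nat.ascFactorial_eq_factorial_mul_choose']
    rw [Nat.ascFactorial_succ, ← Nat.succ_ascFactorial]
  have : (2 * k + (m + 1)) * (k + 1).ascFactorial m =
      (k + (m + 1)) * (k + 1).ascFactorial m + k * (k + 1).ascFactorial m := by ring
  rw [this, h1, h2, Nat.mul_add]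

lemma hCoef_eq (n : ℕ) (hn : 1 ≤ n) (k : ℕ) :
    hCoef n k = ((k + n).choose n : ℝ) + ((k + n - 1).choose n : ℝ) := by
  obtain ⟨m, rfl⟩ : ∃ m, n = m + 1 := ⟨n - 1, by omega⟩
  rw [hCoef]
  rw [show m + 1 - 1 = m from rfl, hCoef_key m k]
  push_cast
  field_simp

lemma aux_sinh (a : ℝ) (ha : a ≠ 0) : (a⁻¹ - a) / 2 = (1 - a ^ 2) / (2 * a) := by
  field_simp

lemma aux_cosh (a : ℝ) (ha : a ≠ 0) : (a⁻¹ + a) / 2 = (1 + a ^ 2) / (2 * a) := by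
  field_simp

lemma aux_final (m : ℕ) (a x : ℝ) (ha : a ≠ 0) (hx : 1 - x ≠ 0) :
    ((1 + x) / (2 * a)) / (((1 - x) / (2 * a)) ^ (m + 1)) =
      2 ^ m * (a ^ m * (1 / (1 - x) ^ (m + 1) + 1 / (1 - x) ^ (m + 1) * x)) := by
  rw [div_pow, div_div_div_eq, mul_pow]
  field_simp
  ring

/-- For every integer `n ≥ 1` and every real `t > 0`, the series
`Σ_{k=0}^∞ h_n(k) e^{-(n/2+k)t}` converges absolutely and
`cosh(t/2)/(sinh(t/2))^{n+1} = 2^n · Σ_{k=0}^∞ h_n(k) e^{-(n/2+k)t}`. -/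
theorem wave_kernel_series (n : ℕ) (hn : 1 ≤ n) (t : ℝ) (ht : 0 < t) :
    Summable (fun k : ℕ => |hCoef n k * Real.exp (-((n : ℝ) / 2 + k) * t)|) ∧
    Real.cosh (t / 2) / (Real.sinh (t / 2)) ^ (n + 1) =
      2 ^ n * ∑' k : ℕ, hCoef n k * Real.exp (-((n : ℝ) / 2 + k) * t) := by
  set a : ℝ := Real.exp (-(t / 2)) with ha_def
  have ha : 0 < a := Real.exp_pos _
  set x : ℝ := a ^ 2 with hx_def
  have hxe : x = Real.exp (-t) := by
    rw [hx_def, ha_def, sq, ← Real.exp_add]; congr 1; ring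
  have hx0 : 0 < x := by positivity
  have hx1 : x < 1 := by
    rw [hxe]; exact Real.exp_lt_one_iff.2 (by linarith)
  have hxn : ‖x‖ < 1 := by rw [Real.norm_eq_abs, abs_of_pos hx0]; exact hx1
  -- the two binomial series
  have h1 : HasSum (fun k : ℕ => ((k + n).choose n : ℝ) * x ^ k) (1 / (1 - x) ^ (n + 1)) :=
    hasSum_choose_mul_geometric_of_norm_lt_one n hxn
  have h2' : HasSum (fun k : ℕ => ((k + 1 + n - 1).choose n : ℝ) * x ^ (k + 1))
      (1 / (1 - x) ^ (n + 1) * x) := by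
    refine (h1.mul_right x).congr_fun fun k => ?_
    rw [show k + 1 + n - 1 = k + n from by omega, pow_succ]
    ring
  have h2 : HasSum (fun k : ℕ => ((k + n - 1).choose n : ℝ) * x ^ k)
      (1 / (1 - x) ^ (n + 1) * x) := by
    have := (hasSum_nat_add_iff (f := fun k : ℕ => ((k + n - 1).choose n : ℝ) * x ^ k) 1).1 h2'
    simpa [Nat.choose_eq_zero_of_lt (show n - 1 < n by omega)] using this
  have hS : HasSum (fun k : ℕ => hCoef n k * x ^ k)
      (1 / (1 - x) ^ (n + 1) + 1 / (1 - x) ^ (n + 1) * x) := by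
    simp only [hCoef_eq n hn, add_mul]
    exact h1.add h2
  have hf : ∀ k : ℕ, hCoef n k * Real.exp (-((n : ℝ) / 2 + k) * t) =
      a ^ n * (hCoef n k * x ^ k) := by
    intro k
    rw [show -((n : ℝ) / 2 + k) * t = (n : ℝ) * (-(t / 2)) + (k : ℝ) * (-t) by ring,
      Real.exp_add, Real.exp_nat_mul, Real.exp_nat_mul, ← ha_def, ← hxe]
    ring
  have hF : HasSum (fun k : ℕ => hCoef n k * Real.exp (-((n : ℝ) / 2 + k) * t))
      (a ^ n * (1 / (1 - x) ^ (n + 1) + 1 / (1 - x) ^ (n + 1) * x)) := by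
    exact (hS.mul_left (a ^ n)).congr_fun fun k => hf k
  have hnonneg : ∀ k : ℕ, 0 ≤ hCoef n k * Real.exp (-((n : ℝ) / 2 + k) * t) := by
    intro k
    have : (0 : ℝ) ≤ hCoef n k := by
      unfold hCoef; positivity
    positivity
  constructor
  · refine Summable.congr hF.summable fun k => ?_
    rw [abs_of_nonneg (hnonneg k)]
  · rw [hF.tsum_eq]
    have h1x : (0 : ℝ) < 1 - x := by linarith
    have hexp : Real.exp (t / 2) = a⁻¹ := by
      rw [ha_def, ← Real.exp_neg, neg_neg]
    have hsinh : Real.sinh (t / 2) = (1 - x) / (2 * a) := by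
      rw [Real.sinh_eq, hexp, hx_def]
      exact aux_sinh a ha.ne'
    have hcosh : Real.cosh (t / 2) = (1 + x) / (2 * a) := by
      rw [Real.cosh_eq, hexp, hx_def]
      exact aux_cosh a ha.ne'
    rw [hsinh, hcosh]
    exact aux_final n a x ha.ne' h1x.ne'
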